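/- arXiv:2112.06849 — 3 statements merged into one kernel-verified Lean document; each statement's English description precedes it below -/
import Mathlib

section
/- Let (Ω, F, P) be a probability space, G ⊂ F a sub-σ-algebra, and let X be a random variable with values in a standard Borel space S. Let X₁, X₂, … be conditionally i.i.d. given G, each with the conditional law of X given G, and let Y be a G-measurable S-valued random variable such that P(X = Y | G) > 0 almost surely. Then the law of Y is absolutely continuous with respect to the law of X. -/
open MeasureTheory ProbabilityTheory

/-- If `X₁, X₂, …` are conditionally i.i.d. given a sub-σ-algebra `G`, each
with the conditional law of `X` given `G`, and `Y` is `G`-measurable with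
`P(X = Y ∣ G) > 0` almost surely, then the law of `Y` is absolutely continuous
with respect to the law of `X`. -/
theorem law_absolutelyContinuous_of_cond_prob_pos
    {Ω S : Type*} [mΩ : MeasurableSpace Ω] [StandardBorelSpace Ω] [Nonempty Ω]
    [MeasurableSpace S] [StandardBorelSpace S] [Nonempty S]
    (μ : Measure Ω) [IsProbabilityMeasure μ]
    (G : MeasurableSpace Ω) (hG : G ≤ mΩ)
    (X : Ω → S) (hX : Measurable[mΩ] X)
    (Xs : ℕ → Ω → S) (hXs : ∀ k, Measurable[mΩ] (Xs k))
    (hindep : iCondIndepFun G hG Xs μ)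
    (hlaw : ∀ k : ℕ, ∀ A : Set S, MeasurableSet A →
      μ[Set.indicator (Xs k ⁻¹' A) (fun _ => (1 : ℝ)) | G]
        =ᵐ[μ] μ[Set.indicator (X ⁻¹' A) (fun _ => (1 : ℝ)) | G])
    (Y : Ω → S) (hY : Measurable[G] Y)
    (hpos : ∀ᵐ ω ∂μ,
      0 < (μ[Set.indicator {ω' | X ω' = Y ω'} (fun _ => (1 : ℝ)) | G]) ω) :
    @Measure.map Ω S mΩ _ Y μ ≪ @Measure.map Ω S mΩ _ X μ := by
  letI := upgradeStandardBorel S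
  letI : MeasurableSpace Ω := mΩ
  have hYm : Measurable[mΩ] Y := hY.mono hG le_rfl
  have hdiag : MeasurableSet[mΩ] {ω | X ω = Y ω} :=
    StronglyMeasurable.measurableSet_eq_fun hX.stronglyMeasurable hYm.stronglyMeasurable
  refine Measure.AbsolutelyContinuous.mk fun A hA h0 => ?_
  rw [Measure.map_apply hX hA] at h0
  rw [Measure.map_apply hYm hA]
  set s : Set Ω := Y ⁻¹' A with hs
  have hsG : MeasurableSet[G] s := hY hA
  have hsm : MeasurableSet[mΩ] s := hG _ hsG
  set f : Ω → ℝ := Set.indicator {ω' | X ω' = Y ω'} (fun _ => (1 : ℝ)) with hf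
  have hfint : Integrable f μ := (integrable_const (1 : ℝ)).indicator hdiag
  -- the set integral of f over s is zero
  have hsub : s ∩ {ω | X ω = Y ω} ⊆ X ⁻¹' A := by
    rintro ω ⟨hω1, hω2⟩
    simp only [Set.mem_preimage]
    rw [hω2]; exact hω1
  have hμ0 : μ (s ∩ {ω | X ω = Y ω}) = 0 :=
    le_antisymm (h0 ▸ measure_mono hsub) zero_le
  have hint0 : ∫ ω in s, f ω ∂μ = 0 := by
    rw [hf, setIntegral_indicator hdiag, setIntegral_const, measureReal_def, hμ0]
    simp
  -- hence the set integral of the conditional expectation is zero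
  have hcint0 : ∫ ω in s, (μ[f|G]) ω ∂μ = 0 := by
    rw [setIntegral_condExp hG hfint hsG, hint0]
  -- positivity a.e. forces μ s = 0
  have hnonneg : 0 ≤ᵐ[μ.restrict s] μ[f|G] :=
    ae_restrict_of_ae (hpos.mono fun ω hω => le_of_lt hω)
  have hzero : μ[f|G] =ᵐ[μ.restrict s] 0 :=
    (setIntegral_eq_zero_iff_of_nonneg_ae hnonneg
      integrable_condExp.integrableOn).mp hcint0
  have hposr : ∀ᵐ ω ∂μ.restrict s, 0 < (μ[f|G]) ω := ae_restrict_of_ae hpos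
  have hfalse : ∀ᵐ ω ∂μ.restrict s, False := by
    filter_upwards [hzero, hposr] with ω h1 h2
    rw [h1] at h2; exact lt_irrefl _ h2
  have : μ.restrict s = 0 := by
    rwa [Filter.eventually_false_iff_eq_bot, ae_eq_bot] at hfalse
  rwa [Measure.restrict_eq_zero] at this
end

section
/- Let h : [a,d] → ℝ ∪ {−∞} be upper semicontinuous, bounded above, and not identically −∞ on either [a,b] or [c,d], where a < b < c < d. Let B be a standard Brownian motion on [a,d] started from B(a) = 0. Then almost surely max_{y ∈ [a,b]} (B(y) + h(y)) ≠ max_{y ∈ [c,d]} (B(y) + h(y)). -/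
open MeasureTheory
open ProbabilityTheory

lemma ereal_iSup_add_le {ι : Sort*} (c : EReal) (f : ι → EReal) :
    (⨆ i, (c + f i)) ≤ c + ⨆ i, f i :=
  iSup_le fun i => add_le_add_right (le_iSup f i) c

lemma ereal_neg_add_cancel (r : ℝ) (x : EReal) : (↑(-r) : EReal) + ((r : EReal) + x) = x := by
  induction x using EReal.rec with
  | bot => simp [EReal.add_bot]
  | coe y => rw [← EReal.coe_add, ← EReal.coe_add]; norm_num
  | top => simp

lemma ereal_add_iSup {ι : Sort*} [Nonempty ι] (r : ℝ) (f : ι → EReal) :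
    (r : EReal) + ⨆ i, f i = ⨆ i, ((r : EReal) + f i) := by
  refine le_antisymm ?_ (ereal_iSup_add_le _ _)
  have h1 : (⨆ i, f i) ≤ (↑(-r) : EReal) + ⨆ i, ((r : EReal) + f i) := by
    calc (⨆ i, f i) = ⨆ i, ((↑(-r) : EReal) + ((r : EReal) + f i)) := by
          simp only [ereal_neg_add_cancel]
      _ ≤ _ := ereal_iSup_add_le _ _
  calc (r : EReal) + ⨆ i, f i ≤ (r:EReal) + ((↑(-r) : EReal) + ⨆ i, ((r : EReal) + f i)) :=
        add_le_add_right h1 _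
    _ = ⨆ i, ((r : EReal) + f i) := by rw [← add_assoc, ← EReal.coe_add]; norm_num

noncomputable def gridPt (p q : ℝ) (n k : ℕ) : ℝ := p + k * ((q - p) / (n + 1))

noncomputable def nbhdSup (h : ℝ → EReal) (p q r x : ℝ) : EReal :=
  ⨆ y : ↥(Set.Icc p q ∩ Set.Icc (x - r) (x + r)), h y

noncomputable def gridApprox (h : ℝ → EReal) (p q : ℝ) (g : ℝ → ℝ) (n : ℕ) : EReal :=
  ⨆ k : Fin (n + 2), (((g (gridPt p q n k) : ℝ) : EReal)
    + nbhdSup h p q ((q - p) / (n + 1)) (gridPt p q n k))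

noncomputable def erealSup (h : ℝ → EReal) (p q : ℝ) (g : ℝ → ℝ) : EReal :=
  ⨆ y : (Set.Icc p q), (((g y.1 : ℝ) : EReal) + h y.1)

lemma gridPt_mem {p q : ℝ} (hpq : p ≤ q) {n k : ℕ} (hk : k ≤ n + 1) :
    gridPt p q n k ∈ Set.Icc p q := by
  have hδ : 0 ≤ (q - p) / (n + 1) := div_nonneg (by linarith) (by positivity)
  constructor
  · have : 0 ≤ (k : ℝ) * ((q - p) / (n + 1)) := by positivity
    simp only [gridPt]; linarith
  · have h1 : (k : ℝ) * ((q - p) / (n + 1)) ≤ ((n : ℝ) + 1) * ((q - p) / (n + 1)) := by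
      apply mul_le_mul_of_nonneg_right _ hδ
      exact_mod_cast hk
    have h2 : ((n : ℝ) + 1) * ((q - p) / (n + 1)) = q - p := by
      field_simp
    simp only [gridPt]; linarith

lemma exists_grid_near {p q : ℝ} (hpq : p < q) {y : ℝ} (hy : y ∈ Set.Icc p q) (n : ℕ) :
    ∃ k : Fin (n + 2), |y - gridPt p q n k| ≤ (q - p) / (n + 1) := by
  set δ := (q - p) / (n + 1) with hδdef
  have hδ : 0 < δ := div_pos (by linarith) (by positivity)
  have hq : gridPt p q n (n + 1) = q := by
    simp only [gridPt, hδdef]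
    push_cast
    field_simp
    ring
  set j := ⌊(y - p) / δ⌋₊ with hj
  rcases le_or_gt j (n + 1) with hle | hlt
  · refine ⟨⟨j, by omega⟩, ?_⟩
    have h1 : (j : ℝ) ≤ (y - p) / δ := Nat.floor_le (div_nonneg (by linarith [hy.1]) hδ.le)
    have h2 : (y - p) / δ < j + 1 := Nat.lt_floor_add_one _
    have h1' : (j : ℝ) * δ ≤ y - p := by
      rw [← le_div_iff₀ hδ]; exact h1
    have h2' : y - p < ((j : ℝ) + 1) * δ := by
      rw [← div_lt_iff₀ hδ]; exact h2
    rw [abs_le]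
    simp only [gridPt, ← hδdef]
    constructor <;> nlinarith
  · refine ⟨⟨n + 1, by omega⟩, ?_⟩
    have h1 : ((n : ℝ) + 1) ≤ (y - p) / δ := by
      have : ((n + 1 : ℕ) : ℝ) ≤ (j : ℝ) := by exact_mod_cast hlt.le
      push_cast at this
      calc ((n : ℝ) + 1) ≤ (j : ℝ) := this
        _ ≤ (y - p) / δ := Nat.floor_le (div_nonneg (by linarith [hy.1]) hδ.le)
    have h1' : ((n : ℝ) + 1) * δ ≤ y - p := by rw [← le_div_iff₀ hδ]; exact h1
    have hq' : q - p = ((n : ℝ) + 1) * δ := by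
      simp only [hδdef]; field_simp
    have hyq : y = q := le_antisymm hy.2 (by linarith)
    simp only [hq]
    push_cast
    rw [hyq]
    simp [hδ.le, abs_of_nonpos]

lemma ereal_add_coe_ne_top {x : EReal} (hx : x ≠ ⊤) (r : ℝ) : x + (r : EReal) ≠ ⊤ := by
  induction x using EReal.rec with
  | bot => simp [EReal.bot_add]
  | coe y => rw [← EReal.coe_add]; exact EReal.coe_ne_top _
  | top => exact absurd rfl hx

open Filter Topology in
lemma gridApprox_key (h : ℝ → EReal) (p q M : ℝ) (hpq : p < q)
    (hbdd : ∀ y ∈ Set.Icc p q, h y ≤ (M : EReal))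
    (hne : ∃ y ∈ Set.Icc p q, h y ≠ ⊥) (g : ℝ → ℝ) (hg : Continuous g) :
    erealSup h p q g ≠ ⊥ ∧ erealSup h p q g ≠ ⊤ ∧
    Tendsto (fun n => (gridApprox h p q g n).toReal) atTop (𝓝 ((erealSup h p q g).toReal)) := by
  obtain ⟨y₀, hy₀, hy₀ne⟩ := hne
  obtain ⟨C, hC⟩ := isCompact_Icc.exists_bound_of_continuousOn (hg.continuousOn (s := Set.Icc p q))
  set S := erealSup h p q g with hSdef
  have hterm : ((g y₀ : ℝ) : EReal) + h y₀ ≠ ⊥ := by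
    simp only [Ne, EReal.add_eq_bot_iff, not_or]
    exact ⟨EReal.coe_ne_bot _, hy₀ne⟩
  have hSbot : S ≠ ⊥ := by
    intro hS
    apply hterm
    apply le_bot_iff.mp
    rw [← hS]
    exact le_iSup (fun y : Set.Icc p q => ((g y.1 : ℝ) : EReal) + h y.1) ⟨y₀, hy₀⟩
  have hSle : S ≤ ((C + M : ℝ) : EReal) := by
    apply iSup_le
    rintro ⟨y, hy⟩
    have h1 : g y ≤ C := (abs_le.mp ((Real.norm_eq_abs _ ▸ hC y hy))).2
    calc ((g y : ℝ) : EReal) + h y ≤ ((C : ℝ) : EReal) + (M : EReal) :=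
          add_le_add (EReal.coe_le_coe_iff.mpr h1) (hbdd y hy)
      _ = ((C + M : ℝ) : EReal) := by rw [← EReal.coe_add]
  have hStop : S ≠ ⊤ := ne_top_of_le_ne_top (EReal.coe_ne_top _) hSle
  refine ⟨hSbot, hStop, ?_⟩
  rw [Metric.tendsto_atTop]
  intro ε hε
  have hUC : UniformContinuousOn g (Set.Icc p q) :=
    isCompact_Icc.uniformContinuousOn_of_continuous hg.continuousOn
  rw [Metric.uniformContinuousOn_iff] at hUC
  obtain ⟨δ', hδ', hUC⟩ := hUC (ε / 4) (by linarith)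
  obtain ⟨N, hN⟩ := exists_nat_gt ((q - p) / δ')
  refine ⟨N, fun n hn => ?_⟩
  have hδn_pos : 0 < (q - p) / (n + 1) := div_pos (by linarith) (by positivity)
  have hδn : (q - p) / (n + 1) < δ' := by
    rw [div_lt_iff₀ (by positivity)]
    have h1 : (q - p) / δ' < N := hN
    have h2 : (N : ℝ) ≤ n := by exact_mod_cast hn
    rw [div_lt_iff₀ hδ'] at h1
    nlinarith
  set A := gridApprox h p q g n with hAdef
  set ε' := ε / 4 with hε'def
  have hε'pos : (0 : ℝ) < ε' := by rw [hε'def]; linarith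
  -- claim (i) : S ≤ A + ε'
  have hi : S ≤ A + ((ε' : ℝ) : EReal) := by
    apply iSup_le
    rintro ⟨y, hy⟩
    obtain ⟨k, hk⟩ := exists_grid_near hpq hy n
    have hptk : gridPt p q n k ∈ Set.Icc p q := gridPt_mem hpq.le (by omega : (k : ℕ) ≤ n + 1)
    have hgy : g y ≤ g (gridPt p q n k) + ε' := by
      have h2 := hUC y hy (gridPt p q n k) hptk (by
        rw [Real.dist_eq]; exact lt_of_le_of_lt hk hδn)
      rw [Real.dist_eq] at h2
      have h3 := (abs_lt.mp h2).2
      linarith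
    have hmem : y ∈ Set.Icc p q ∩
        Set.Icc (gridPt p q n k - (q - p) / (n + 1)) (gridPt p q n k + (q - p) / (n + 1)) := by
      have h4 := abs_le.mp hk
      exact ⟨hy, by constructor <;> linarith [h4.1, h4.2]⟩
    have hhy : h y ≤ nbhdSup h p q ((q - p) / (n + 1)) (gridPt p q n k) :=
      le_iSup (fun z : ↥(Set.Icc p q ∩ Set.Icc (gridPt p q n k - (q - p) / (n + 1))
        (gridPt p q n k + (q - p) / (n + 1))) => h z.1) ⟨y, hmem⟩
    calc ((g y : ℝ) : EReal) + h y
        ≤ ((g (gridPt p q n k) + ε' : ℝ) : EReal)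
          + nbhdSup h p q ((q - p) / (n + 1)) (gridPt p q n k) :=
          add_le_add (EReal.coe_le_coe_iff.mpr hgy) hhy
      _ = (((g (gridPt p q n k) : ℝ) : EReal)
          + nbhdSup h p q ((q - p) / (n + 1)) (gridPt p q n k)) + ((ε' : ℝ) : EReal) := by
          rw [EReal.coe_add, add_right_comm]
      _ ≤ A + ((ε' : ℝ) : EReal) := by
          apply add_le_add_left
          exact le_iSup (fun k : Fin (n + 2) => ((g (gridPt p q n k) : ℝ) : EReal)
            + nbhdSup h p q ((q - p) / (n + 1)) (gridPt p q n k)) k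
  -- claim (ii) : A ≤ S + ε'
  have hii : A ≤ S + ((ε' : ℝ) : EReal) := by
    apply iSup_le
    intro k
    set x := gridPt p q n k with hxdef
    have hptk : x ∈ Set.Icc p q := gridPt_mem hpq.le (by omega : (k : ℕ) ≤ n + 1)
    have hne' : Nonempty ↥(Set.Icc p q ∩ Set.Icc (x - (q - p) / (n + 1)) (x + (q - p) / (n + 1))) :=
      ⟨⟨x, hptk, by constructor <;> linarith [hδn_pos]⟩⟩
    rw [show nbhdSup h p q ((q - p) / (n + 1)) x
        = ⨆ y : ↥(Set.Icc p q ∩ Set.Icc (x - (q - p) / (n + 1)) (x + (q - p) / (n + 1))), h y.1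
        from rfl, ereal_add_iSup]
    apply iSup_le
    rintro ⟨y, hy1, hy2⟩
    have hgy : g x ≤ g y + ε' := by
      have hdist : dist x y < δ' := by
        rw [Real.dist_eq]
        have h4 : x - (q - p) / (n + 1) ≤ y := hy2.1
        have h5 : y ≤ x + (q - p) / (n + 1) := hy2.2
        rw [abs_lt]; constructor <;> linarith
      have h2 := hUC x hptk y hy1 hdist
      rw [Real.dist_eq] at h2
      have h3 := (abs_lt.mp h2).2
      linarith
    calc ((g x : ℝ) : EReal) + h y
        ≤ ((g y + ε' : ℝ) : EReal) + h y := add_le_add_left (EReal.coe_le_coe_iff.mpr hgy) _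
      _ = (((g y : ℝ) : EReal) + h y) + ((ε' : ℝ) : EReal) := by rw [EReal.coe_add, add_right_comm]
      _ ≤ S + ((ε' : ℝ) : EReal) := by
          apply add_le_add_left
          exact le_iSup (fun z : Set.Icc p q => ((g z.1 : ℝ) : EReal) + h z.1) ⟨y, hy1⟩
  -- finiteness of A
  have hAbot : A ≠ ⊥ := by
    intro hA
    rw [hA, EReal.bot_add] at hi
    exact hSbot (le_bot_iff.mp hi)
  have hAtop : A ≠ ⊤ := ne_top_of_le_ne_top (ereal_add_coe_ne_top hStop _) hii
  -- convert to reals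
  have hir : S.toReal ≤ A.toReal + ε' := by
    have := EReal.toReal_le_toReal hi hSbot (ereal_add_coe_ne_top hAtop _)
    rwa [EReal.toReal_add hAtop hAbot (EReal.coe_ne_top _) (EReal.coe_ne_bot _),
      EReal.toReal_coe] at this
  have hiir : A.toReal ≤ S.toReal + ε' := by
    have := EReal.toReal_le_toReal hii hAbot (ereal_add_coe_ne_top hStop _)
    rwa [EReal.toReal_add hStop hSbot (EReal.coe_ne_top _) (EReal.coe_ne_bot _),
      EReal.toReal_coe] at this
  rw [Real.dist_eq, abs_lt]
  constructor <;> [linarith; linarith]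

lemma indep_mono {Ω : Type*} {_mΩ : MeasurableSpace Ω} {μ : Measure Ω}
    {m₁ m₂ m₃ m₄ : MeasurableSpace Ω}
    (h : Indep m₁ m₂ μ) (h31 : m₃ ≤ m₁) (h42 : m₄ ≤ m₂) : Indep m₃ m₄ μ := by
  rw [Indep_iff] at h ⊢
  exact fun t1 t2 h1 h2 => h t1 t2 (h31 _ h1) (h42 _ h2)

noncomputable def incF {Ω : Type*} (B : ℝ → Ω → ℝ) (a b c d : ℝ) :
    (↥(Set.Icc a b) ⊕ ↥(Set.Icc c d)) → Ω → ℝ :=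
  fun i ω => Sum.elim (fun s : ↥(Set.Icc a b) => B s.1 ω - B b ω)
    (fun t : ↥(Set.Icc c d) => B t.1 ω - B c ω) i

lemma indep_finset_core
    {Ω : Type*} [mΩ : MeasurableSpace Ω] (P : Measure Ω) [IsProbabilityMeasure P]
    (a b c d : ℝ) (hab : a < b) (hbc : b < c) (hcd : c < d)
    (B : ℝ → Ω → ℝ) (hmeas : ∀ t, Measurable (B t))
    (hincr : ∀ n : ℕ, ∀ t : Fin (n + 1) → ℝ, Monotone t → (∀ i, a ≤ t i) →
      iIndepFun
        (fun i : Fin n => fun ω => B (t i.succ) ω - B (t i.castSucc) ω) P)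
    (F : Finset (↥(Set.Icc a b) ⊕ ↥(Set.Icc c d))) :
    Indep (⨆ i ∈ F, MeasurableSpace.comap (incF B a b c d i) (inferInstance : MeasurableSpace ℝ))
      (MeasurableSpace.comap (fun ω => B c ω - B b ω) (inferInstance : MeasurableSpace ℝ)) P := by
  classical
  set point : (↥(Set.Icc a b) ⊕ ↥(Set.Icc c d)) → ℝ := Sum.elim (fun s => s.1) (fun t => t.1) with hpoint
  set E : Finset ℝ := F.image point ∪ {b, c} with hE
  have hbE : b ∈ E := by simp [hE]
  have hcE : c ∈ E := by simp [hE]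
  have hEmem : ∀ x ∈ E, x ∈ Set.Icc a b ∨ x ∈ Set.Icc c d := by
    intro x hx
    rw [hE, Finset.mem_union] at hx
    rcases hx with hx | hx
    · obtain ⟨i, _, rfl⟩ := Finset.mem_image.mp hx
      rcases i with s | t
      · exact Or.inl s.2
      · exact Or.inr t.2
    · simp only [Finset.mem_insert, Finset.mem_singleton] at hx
      rcases hx with rfl | rfl
      · exact Or.inl ⟨hab.le, le_refl x⟩
      · exact Or.inr ⟨le_refl x, hcd.le⟩
  have hNpos : 0 < E.card := Finset.card_pos.mpr ⟨b, hbE⟩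
  obtain ⟨n, hn⟩ : ∃ n, E.card = n + 1 := ⟨E.card - 1, by omega⟩
  set iso := E.orderIsoOfFin hn with hiso
  set t : Fin (n + 1) → ℝ := fun i => (iso i : ℝ) with ht
  have hmono : Monotone t := fun i j hij => Subtype.coe_le_coe.mpr (iso.monotone hij)
  have hta : ∀ i, a ≤ t i := by
    intro i
    rcases hEmem _ (iso i).2 with h | h
    · exact h.1
    · exact le_trans (le_trans hab.le hbc.le) h.1
  set g : Fin n → Ω → ℝ := fun i ω => B (t i.succ) ω - B (t i.castSucc) ω with hg
  have hIndep := hincr n t hmono hta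
  have hgmeas : ∀ i, Measurable (g i) := fun i => (hmeas _).sub (hmeas _)
  set kb : Fin (n + 1) := iso.symm ⟨b, hbE⟩ with hkb
  set kc : Fin (n + 1) := iso.symm ⟨c, hcE⟩ with hkc
  have htkb : t kb = b := by rw [ht]; simp [hkb]
  have htkc : t kc = c := by rw [ht]; simp [hkc]
  have hkblt : kb < kc := by
    rw [hkb, hkc, iso.symm.lt_iff_lt]
    exact Subtype.mk_lt_mk.mpr hbc
  have hkbkc : (kb : ℕ) + 1 = (kc : ℕ) := by
    by_contra hne
    have hlt : (kb : ℕ) + 1 < (kc : ℕ) := by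
      have := (Fin.lt_def.mp hkblt)
      omega
    set j : Fin (n + 1) := ⟨(kb : ℕ) + 1, by omega⟩ with hj
    have h1 : kb < j := by rw [Fin.lt_def]; simp [hj]
    have h2 : j < kc := by rw [Fin.lt_def]; simpa [hj] using hlt
    have hb_lt : b < t j := by
      rw [← htkb]
      exact_mod_cast iso.strictMono h1
    have hlt_c : t j < c := by
      rw [← htkc]
      exact_mod_cast iso.strictMono h2
    rcases hEmem _ (iso j).2 with h | h
    · exact absurd h.2 (not_le.mpr hb_lt)
    · exact absurd h.1 (not_le.mpr hlt_c)
  have hkbn : (kb : ℕ) < n := by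
    have := kc.isLt
    omega
  set iG : Fin n := ⟨(kb : ℕ), hkbn⟩ with hiG
  have hgiG : g iG = fun ω => B c ω - B b ω := by
    have e1 : iG.castSucc = kb := by
      apply Fin.ext; simp [hiG]
    have e2 : iG.succ = kc := by
      apply Fin.ext; simp [hiG, hkbkc]
    funext ω
    rw [hg]
    simp only [e1, e2, htkb, htkc]
  -- telescoping
  have htel : ∀ (i j : Fin (n + 1)), (i : ℕ) ≤ (j : ℕ) → ∀ ω,
      B (t j) ω - B (t i) ω
        = ∑ l ∈ Finset.Ico (i : ℕ) (j : ℕ), (if hl : l < n then g ⟨l, hl⟩ ω else 0) := by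
    intro i j hij ω
    set v : ℕ → ℝ := fun k => B (t ⟨min k n, by omega⟩) ω with hv
    have hterm : ∀ l ∈ Finset.Ico (i : ℕ) (j : ℕ),
        (if hl : l < n then g ⟨l, hl⟩ ω else 0) = v (l + 1) - v l := by
      intro l hl
      rw [Finset.mem_Ico] at hl
      have hln : l < n := by
        have := j.isLt
        omega
      rw [dif_pos hln]
      have e1 : (⟨l, hln⟩ : Fin n).succ = (⟨min (l + 1) n, by omega⟩ : Fin (n + 1)) := by
        apply Fin.ext; simp; omega
      have e2 : (⟨l, hln⟩ : Fin n).castSucc = (⟨min l n, by omega⟩ : Fin (n + 1)) := by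
        apply Fin.ext; simp; omega
      rw [hg]
      simp only [e1, e2, hv]
    rw [Finset.sum_congr rfl hterm, Finset.sum_Ico_eq_sub _ hij,
      Finset.sum_range_sub (fun k => v k), Finset.sum_range_sub (fun k => v k)]
    have e3 : v (j : ℕ) = B (t j) ω := by
      have hj : (⟨min ((j : ℕ)) n, by omega⟩ : Fin (n + 1)) = j := Fin.ext (by simp; omega)
      calc v ((j : ℕ)) = B (t ⟨min ((j : ℕ)) n, by omega⟩) ω := rfl
        _ = B (t j) ω := by rw [hj]
    have e4 : v (i : ℕ) = B (t i) ω := by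
      have hi2 : (⟨min ((i : ℕ)) n, by omega⟩ : Fin (n + 1)) = i := Fin.ext (by
        simp
        omega)
      calc v ((i : ℕ)) = B (t ⟨min ((i : ℕ)) n, by omega⟩) ω := rfl
        _ = B (t i) ω := by rw [hi2]
    rw [e3, e4]
    ring
  -- the vector of increments avoiding the (b,c) increment
  set Sc : Finset (Fin n) := {iG}ᶜ with hSc
  set vec : Ω → (↥Sc → ℝ) := fun ω (l : ↥Sc) => g l.1 ω with hvec
  have hIF := hIndep.indepFun_finset Sc {iG} disjoint_compl_left hgmeas
  have hGindep : IndepFun vec (fun ω => B c ω - B b ω) P := by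
    have heval : Measurable
        (fun x : (↥({iG} : Finset (Fin n)) → ℝ) => x ⟨iG, Finset.mem_singleton_self iG⟩) :=
      measurable_pi_apply _
    have h2 := hIF.comp measurable_id heval
    have h3 : (fun x : (↥({iG} : Finset (Fin n)) → ℝ) => x ⟨iG, Finset.mem_singleton_self iG⟩)
        ∘ (fun a (i : ↥({iG} : Finset (Fin n))) => g i.1 a) = fun ω => B c ω - B b ω := by
      funext ω
      simp only [Function.comp_apply]
      rw [hgiG]
    rwa [h3] at h2
  have hGI : Indep (MeasurableSpace.comap vec (MeasurableSpace.pi))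
      (MeasurableSpace.comap (fun ω => B c ω - B b ω) (inferInstance : MeasurableSpace ℝ)) P :=
    (IndepFun_iff_Indep _ _ _).mp hGindep
  refine indep_mono hGI ?_ le_rfl
  apply iSup₂_le
  rintro (s | u) hiF
  · -- left interval point
    have hsE : (s.1 : ℝ) ∈ E := by
      rw [hE]
      apply Finset.mem_union_left
      exact Finset.mem_image.mpr ⟨Sum.inl s, hiF, rfl⟩
    set ks : Fin (n + 1) := iso.symm ⟨s.1, hsE⟩ with hks
    have htks : t ks = s.1 := by rw [ht]; simp [hks]
    have hkskb : (ks : ℕ) ≤ (kb : ℕ) := by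
      have h9 : ks ≤ kb := by
        rw [hks, hkb, iso.symm.le_iff_le]
        exact Subtype.mk_le_mk.mpr s.2.2
      exact h9
    set φ : (↥Sc → ℝ) → ℝ := fun x => -∑ l ∈ Finset.Ico (ks : ℕ) (kb : ℕ),
      (if hl : l < n ∧ l ≠ (iG : ℕ) then
        x ⟨⟨l, hl.1⟩, by
          rw [hSc, Finset.mem_compl, Finset.mem_singleton]
          exact fun hc => hl.2 (congrArg Fin.val hc)⟩
      else 0) with hφ
    have hφm : Measurable φ := by
      apply Measurable.neg
      apply Finset.measurable_sum
      intro l _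
      by_cases hl : l < n ∧ l ≠ (iG : ℕ)
      · simp only [dif_pos hl]
        exact measurable_pi_apply _
      · simp only [dif_neg hl]
        exact measurable_const
    have hcomp : incF B a b c d (Sum.inl s) = φ ∘ vec := by
      funext ω
      have hsum : ∀ l ∈ Finset.Ico (ks : ℕ) (kb : ℕ),
          (if hl : l < n ∧ l ≠ (iG : ℕ) then
            vec ω ⟨⟨l, hl.1⟩, by
              rw [hSc, Finset.mem_compl, Finset.mem_singleton]
              exact fun hc => hl.2 (congrArg Fin.val hc)⟩
          else 0) = (if hl : l < n then g ⟨l, hl⟩ ω else 0) := by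
        intro l hl
        rw [Finset.mem_Ico] at hl
        have h1 : l < n := by omega
        have h2 : l ≠ (iG : ℕ) := by simp only [hiG]; omega
        rw [dif_pos ⟨h1, h2⟩, dif_pos h1]
      show incF B a b c d (Sum.inl s) ω = φ (vec ω)
      rw [hφ]
      simp only
      rw [Finset.sum_congr rfl hsum, ← htel ks kb hkskb ω, htkb, htks]
      show B s.1 ω - B b ω = -(B b ω - B s.1 ω)
      ring
    rw [hcomp, ← MeasurableSpace.comap_comp]
    exact MeasurableSpace.comap_mono (measurable_iff_comap_le.mp hφm)
  · -- right interval point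
    have huE : (u.1 : ℝ) ∈ E := by
      rw [hE]
      apply Finset.mem_union_left
      exact Finset.mem_image.mpr ⟨Sum.inr u, hiF, rfl⟩
    set ku : Fin (n + 1) := iso.symm ⟨u.1, huE⟩ with hku
    have htku : t ku = u.1 := by rw [ht]; simp [hku]
    have hkcku : (kc : ℕ) ≤ (ku : ℕ) := by
      have h9 : kc ≤ ku := by
        rw [hkc, hku, iso.symm.le_iff_le]
        exact Subtype.mk_le_mk.mpr u.2.1
      exact h9
    set φ : (↥Sc → ℝ) → ℝ := fun x => ∑ l ∈ Finset.Ico (kc : ℕ) (ku : ℕ),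
      (if hl : l < n ∧ l ≠ (iG : ℕ) then
        x ⟨⟨l, hl.1⟩, by
          rw [hSc, Finset.mem_compl, Finset.mem_singleton]
          exact fun hc => hl.2 (congrArg Fin.val hc)⟩
      else 0) with hφ
    have hφm : Measurable φ := by
      apply Finset.measurable_sum
      intro l _
      by_cases hl : l < n ∧ l ≠ (iG : ℕ)
      · simp only [dif_pos hl]
        exact measurable_pi_apply _
      · simp only [dif_neg hl]
        exact measurable_const
    have hcomp : incF B a b c d (Sum.inr u) = φ ∘ vec := by
      funext ω
      have hsum : ∀ l ∈ Finset.Ico (kc : ℕ) (ku : ℕ),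
          (if hl : l < n ∧ l ≠ (iG : ℕ) then
            vec ω ⟨⟨l, hl.1⟩, by
              rw [hSc, Finset.mem_compl, Finset.mem_singleton]
              exact fun hc => hl.2 (congrArg Fin.val hc)⟩
          else 0) = (if hl : l < n then g ⟨l, hl⟩ ω else 0) := by
        intro l hl
        rw [Finset.mem_Ico] at hl
        have hkun : (ku : ℕ) ≤ n := by omega
        have h1 : l < n := by omega
        have h2 : l ≠ (iG : ℕ) := by simp only [hiG]; omega
        rw [dif_pos ⟨h1, h2⟩, dif_pos h1]
      show incF B a b c d (Sum.inr u) ω = φ (vec ω)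
      rw [hφ]
      simp only
      rw [Finset.sum_congr rfl hsum, ← htel kc ku hkcku ω, htkc, htku]
      rfl
    rw [hcomp, ← MeasurableSpace.comap_comp]
    exact MeasurableSpace.comap_mono (measurable_iff_comap_le.mp hφm)

lemma incF_measurable {Ω : Type*} [mΩ : MeasurableSpace Ω] (B : ℝ → Ω → ℝ)
    (hmeas : ∀ t, Measurable (B t)) (a b c d : ℝ)
    (i : ↥(Set.Icc a b) ⊕ ↥(Set.Icc c d)) : Measurable (incF B a b c d i) := by
  rcases i with s | u
  · exact (hmeas _).sub (hmeas _)
  · exact (hmeas _).sub (hmeas _)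

lemma indep_sup_core
    {Ω : Type*} [mΩ : MeasurableSpace Ω] (P : Measure Ω) [IsProbabilityMeasure P]
    (a b c d : ℝ) (hab : a < b) (hbc : b < c) (hcd : c < d)
    (B : ℝ → Ω → ℝ) (hmeas : ∀ t, Measurable (B t))
    (hincr : ∀ n : ℕ, ∀ t : Fin (n + 1) → ℝ, Monotone t → (∀ i, a ≤ t i) →
      iIndepFun
        (fun i : Fin n => fun ω => B (t i.succ) ω - B (t i.castSucc) ω) P) :
    Indep (⨆ i : (↥(Set.Icc a b) ⊕ ↥(Set.Icc c d)),
        MeasurableSpace.comap (incF B a b c d i) (inferInstance : MeasurableSpace ℝ))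
      (MeasurableSpace.comap (fun ω => B c ω - B b ω) (inferInstance : MeasurableSpace ℝ)) P := by
  classical
  have h1 : (⨆ i : (↥(Set.Icc a b) ⊕ ↥(Set.Icc c d)),
      MeasurableSpace.comap (incF B a b c d i) (inferInstance : MeasurableSpace ℝ))
      = ⨆ F : Finset (↥(Set.Icc a b) ⊕ ↥(Set.Icc c d)),
        ⨆ i ∈ F, MeasurableSpace.comap (incF B a b c d i) (inferInstance : MeasurableSpace ℝ) := by
    apply le_antisymm
    · apply iSup_le
      intro i
      refine le_iSup_of_le {i} ?_
      exact le_iSup₂ (f := fun (j : ↥(Set.Icc a b) ⊕ ↥(Set.Icc c d)) (_ : j ∈ ({i} : Finset _)) =>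
        MeasurableSpace.comap (incF B a b c d j) (inferInstance : MeasurableSpace ℝ)) i
        (Finset.mem_singleton_self i)
    · apply iSup_le
      intro F
      apply iSup₂_le
      intro i _
      exact le_iSup (fun (j : ↥(Set.Icc a b) ⊕ ↥(Set.Icc c d)) =>
        MeasurableSpace.comap (incF B a b c d j) (inferInstance : MeasurableSpace ℝ)) i
  rw [h1]
  apply indep_iSup_of_directed_le
  · intro F
    exact indep_finset_core P a b c d hab hbc hcd B hmeas hincr F
  · intro F
    apply iSup₂_le
    intro i _
    exact measurable_iff_comap_le.mp (incF_measurable B hmeas a b c d i)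
  · exact measurable_iff_comap_le.mp ((hmeas c).sub (hmeas b))
  · apply Monotone.directed_le
    intro F F' hFF'
    apply iSup₂_le
    intro i hi
    exact le_iSup₂ (f := fun (j : ↥(Set.Icc a b) ⊕ ↥(Set.Icc c d)) (_ : j ∈ F') =>
      MeasurableSpace.comap (incF B a b c d j) (inferInstance : MeasurableSpace ℝ)) i (hFF' hi)

open Filter Topology in
lemma sup_toReal_measurable {Ω : Type*} {m' : MeasurableSpace Ω}
    (B : ℝ → Ω → ℝ) (e p q M : ℝ) (hpq : p < q) (h : ℝ → EReal)
    (hbdd : ∀ y ∈ Set.Icc p q, h y ≤ (M : EReal))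
    (hne : ∃ y ∈ Set.Icc p q, h y ≠ ⊥)
    (hcont : ∀ ω, Continuous fun t => B t ω)
    (hW : ∀ y ∈ Set.Icc p q, Measurable[m'] (fun ω => B y ω - B e ω)) :
    Measurable[m'] (fun ω => (erealSup h p q (fun y => B y ω - B e ω)).toReal) := by
  apply measurable_of_tendsto_metrizable
    (f := fun n ω => (gridApprox h p q (fun y => B y ω - B e ω) n).toReal)
  · intro n
    apply measurable_ereal_toReal.comp
    apply Measurable.iSup
    intro k
    have hptk : gridPt p q n k ∈ Set.Icc p q := gridPt_mem hpq.le (by omega)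
    have hmono : Monotone (fun x : EReal => x + nbhdSup h p q ((q - p) / (n + 1)) (gridPt p q n k)) :=
      fun x y (hxy : x ≤ y) => add_le_add_left hxy _
    have hadd := hmono.measurable
    exact hadd.comp (measurable_coe_real_ereal.comp (hW _ hptk))
  · rw [tendsto_pi_nhds]
    intro ω
    exact (gridApprox_key h p q M hpq hbdd hne (fun y => B y ω - B e ω)
      ((hcont ω).sub continuous_const)).2.2

noncomputable def incSigma {Ω : Type*} (B : ℝ → Ω → ℝ) (a b c d : ℝ) : MeasurableSpace Ω :=
  ⨆ i, MeasurableSpace.comap (incF B a b c d i) (inferInstance : MeasurableSpace ℝ)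

/-- A standard one-dimensional Brownian motion started from time `a` (with
`B a = 0`): continuous paths, centered Gaussian increments of variance `t−s`,
and independent increments. -/
def IsStandardBM {Ω : Type*} [MeasurableSpace Ω] (P : MeasureTheory.Measure Ω)
    (a : ℝ) (B : ℝ → Ω → ℝ) : Prop :=
  (∀ t, Measurable (B t)) ∧
  (∀ ω, Continuous fun t => B t ω) ∧
  (∀ ω, B a ω = 0) ∧
  (∀ s t : ℝ, a ≤ s → s ≤ t →
    MeasureTheory.Measure.map (fun ω => B t ω - B s ω) P =
      ProbabilityTheory.gaussianReal 0 (Real.toNNReal (t - s))) ∧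
  (∀ n : ℕ, ∀ t : Fin (n + 1) → ℝ, Monotone t → (∀ i, a ≤ t i) →
    ProbabilityTheory.iIndepFun
      (fun i : Fin n => fun ω => B (t i.succ) ω - B (t i.castSucc) ω) P)

/-- For `h` upper semicontinuous, bounded above and not identically `-oo` on
either `[a,b]` or `[c,d]` (with `a < b < c < d`), and `B` a Brownian motion on
`[a,d]` started from `B a = 0`, almost surely the maxima of `B + h` over
`[a,b]` and over `[c,d]` differ. -/
theorem max_over_disjoint_intervals_ne
    {Ω : Type*} [MeasurableSpace Ω] (P : Measure Ω) [IsProbabilityMeasure P]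
    (a b c d : ℝ) (hab : a < b) (hbc : b < c) (hcd : c < d)
    (B : ℝ → Ω → ℝ) (hB : IsStandardBM P a B)
    (h : ℝ → EReal)
    (husc : UpperSemicontinuousOn h (Set.Icc a d))
    (hbdd : ∃ M : ℝ, ∀ y ∈ Set.Icc a d, h y ≤ (M : EReal))
    (hne₁ : ∃ y ∈ Set.Icc a b, h y ≠ ⊥)
    (hne₂ : ∃ y ∈ Set.Icc c d, h y ≠ ⊥) :
    ∀ᵐ ω ∂P,
      (⨆ y : Set.Icc a b, (((B y.1 ω : ℝ) : EReal) + h y.1)) ≠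
      (⨆ y : Set.Icc c d, (((B y.1 ω : ℝ) : EReal) + h y.1)) := by
  classical
  obtain ⟨hBmeas, hBcont, hB0, hBgauss, hBincr⟩ := hB
  obtain ⟨M, hM⟩ := hbdd
  have hbd : b ≤ d := le_trans hbc.le hcd.le
  have hac : a ≤ c := le_trans hab.le hbc.le
  have hbdd₁ : ∀ y ∈ Set.Icc a b, h y ≤ (M : EReal) := fun y hy =>
    hM y ⟨hy.1, le_trans hy.2 hbd⟩
  have hbdd₂ : ∀ y ∈ Set.Icc c d, h y ≤ (M : EReal) := fun y hy =>
    hM y ⟨le_trans hac hy.1, hy.2⟩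
  have h𝒢le : incSigma B a b c d ≤ ‹MeasurableSpace Ω› :=
    iSup_le fun i => measurable_iff_comap_le.mp (incF_measurable B hBmeas a b c d i)
  have hGmeas : Measurable (fun ω => B c ω - B b ω) := (hBmeas c).sub (hBmeas b)
  have hW1 : ∀ y ∈ Set.Icc a b, Measurable[incSigma B a b c d] (fun ω => B y ω - B b ω) := by
    intro y hy
    exact measurable_iff_comap_le.mpr
      (le_iSup (fun i => MeasurableSpace.comap (incF B a b c d i)
        (inferInstance : MeasurableSpace ℝ)) (Sum.inl ⟨y, hy⟩))
  have hW2 : ∀ y ∈ Set.Icc c d, Measurable[incSigma B a b c d] (fun ω => B y ω - B c ω) := by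
    intro y hy
    exact measurable_iff_comap_le.mpr
      (le_iSup (fun i => MeasurableSpace.comap (incF B a b c d i)
        (inferInstance : MeasurableSpace ℝ)) (Sum.inr ⟨y, hy⟩))
  have hs1 : Measurable[incSigma B a b c d] (fun ω => (erealSup h a b (fun y => B y ω - B b ω)).toReal) :=
    sup_toReal_measurable B b a b M hab h hbdd₁ hne₁ hBcont hW1
  have hs2 : Measurable[incSigma B a b c d] (fun ω => (erealSup h c d (fun y => B y ω - B c ω)).toReal) :=
    sup_toReal_measurable B c c d M hcd h hbdd₂ hne₂ hBcont hW2
  set Z : Ω → ℝ := fun ω => (erealSup h a b (fun y => B y ω - B b ω)).toReal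
    - (erealSup h c d (fun y => B y ω - B c ω)).toReal with hZdef
  have hZ𝒢 : Measurable[incSigma B a b c d] Z := hs1.sub hs2
  have hZmeas : Measurable Z := hZ𝒢.mono h𝒢le le_rfl
  have hIndep : Indep (incSigma B a b c d)
      (MeasurableSpace.comap (fun ω => B c ω - B b ω) (inferInstance : MeasurableSpace ℝ)) P :=
    indep_sup_core P a b c d hab hbc hcd B hBmeas hBincr
  have hZG : IndepFun Z (fun ω => B c ω - B b ω) P :=
    (IndepFun_iff_Indep _ _ _).mpr
      (indep_mono hIndep (measurable_iff_comap_le.mp hZ𝒢) le_rfl)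
  have hmap : Measure.map (fun ω => B c ω - B b ω) P
      = gaussianReal 0 (Real.toNNReal (c - b)) := hBgauss b c hab.le hbc.le
  have hv : Real.toNNReal (c - b) ≠ 0 := by
    rw [Ne, Real.toNNReal_eq_zero]
    exact not_le.mpr (by linarith)
  have hsing : ∀ z : ℝ, (Measure.map (fun ω => B c ω - B b ω) P) {z} = 0 := by
    intro z
    rw [hmap]
    exact gaussianReal_absolutelyContinuous 0 hv (measure_singleton z)
  have hD : MeasurableSet {p : ℝ × ℝ | p.1 = p.2} := by
    have he : {p : ℝ × ℝ | p.1 = p.2} = (fun p : ℝ × ℝ => p.1 - p.2) ⁻¹' {0} := by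
      ext p; simp [sub_eq_zero]
    rw [he]
    exact (measurable_fst.sub measurable_snd) (measurableSet_singleton 0)
  haveI : IsProbabilityMeasure (Measure.map Z P) :=
    Measure.isProbabilityMeasure_map hZmeas.aemeasurable
  haveI : IsProbabilityMeasure (Measure.map (fun ω => B c ω - B b ω) P) :=
    Measure.isProbabilityMeasure_map hGmeas.aemeasurable
  have hpair := (indepFun_iff_map_prod_eq_prod_map_map hZmeas.aemeasurable
    hGmeas.aemeasurable).mp hZG
  have hnull : P {ω | Z ω = B c ω - B b ω} = 0 := by
    have h1 : {ω | Z ω = B c ω - B b ω}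
        = (fun ω => (Z ω, B c ω - B b ω)) ⁻¹' {p : ℝ × ℝ | p.1 = p.2} := rfl
    rw [h1, ← Measure.map_apply (hZmeas.prodMk hGmeas) hD, hpair, Measure.prod_apply hD]
    have h2 : ∀ z : ℝ, (Measure.map (fun ω => B c ω - B b ω) P)
        (Prod.mk z ⁻¹' {p : ℝ × ℝ | p.1 = p.2}) = 0 := by
      intro z
      have he : (Prod.mk z ⁻¹' {p : ℝ × ℝ | p.1 = p.2}) = {z} := by
        ext w; simp [eq_comm]
      rw [he]
      exact hsing z
    simp only [h2]
    exact lintegral_zero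
  rw [ae_iff]
  apply measure_mono_null _ hnull
  intro ω hω
  simp only [Set.mem_setOf_eq, not_not] at hω
  haveI i1 : Nonempty ↥(Set.Icc a b) := (Set.nonempty_Icc.mpr hab.le).to_subtype
  haveI i2 : Nonempty ↥(Set.Icc c d) := (Set.nonempty_Icc.mpr hcd.le).to_subtype
  have key := gridApprox_key h a b M hab hbdd₁ hne₁ (fun y => B y ω - B b ω)
    ((hBcont ω).sub continuous_const)
  have key2 := gridApprox_key h c d M hcd hbdd₂ hne₂ (fun y => B y ω - B c ω)
    ((hBcont ω).sub continuous_const)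
  have hrepr1 : (⨆ y : Set.Icc a b, (((B y.1 ω : ℝ) : EReal) + h y.1))
      = ((B b ω : ℝ) : EReal) + erealSup h a b (fun y => B y ω - B b ω) := by
    rw [show erealSup h a b (fun y => B y ω - B b ω)
        = ⨆ y : Set.Icc a b, (((B y.1 ω - B b ω : ℝ) : EReal) + h y.1) from rfl,
      ereal_add_iSup]
    apply iSup_congr
    intro y
    rw [← add_assoc, ← EReal.coe_add]
    have he : B b ω + (B y.1 ω - B b ω) = B y.1 ω := by ring
    rw [he]
  have hrepr2 : (⨆ y : Set.Icc c d, (((B y.1 ω : ℝ) : EReal) + h y.1))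
      = ((B c ω : ℝ) : EReal) + erealSup h c d (fun y => B y ω - B c ω) := by
    rw [show erealSup h c d (fun y => B y ω - B c ω)
        = ⨆ y : Set.Icc c d, (((B y.1 ω - B c ω : ℝ) : EReal) + h y.1) from rfl,
      ereal_add_iSup]
    apply iSup_congr
    intro y
    rw [← add_assoc, ← EReal.coe_add]
    have he : B c ω + (B y.1 ω - B c ω) = B y.1 ω := by ring
    rw [he]
  rw [hrepr1, hrepr2, ← EReal.coe_toReal key.2.1 key.1, ← EReal.coe_toReal key2.2.1 key2.1,
    ← EReal.coe_add, ← EReal.coe_add, EReal.coe_eq_coe_iff] at hω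
  show Z ω = B c ω - B b ω
  rw [hZdef]
  simp only
  linarith
end

section
/- Let h : ℝ → ℝ satisfy |h(t) − h(0)| ≤ C|t|^α for all t in a neighborhood of 0, with constants C > 0 and α > 1/2, and let B be a standard Brownian motion with B(0) = 0. Then for any a < 0 < b, almost surely the function B + h does not attain its maximum over [a,b] at the point 0. -/
open MeasureTheory ProbabilityTheory Real Filter Set
open scoped NNReal ENNReal Topology

/-- Lower bound for the upper tail of a Gaussian when the threshold is
comparable to the standard deviation. -/
lemma gauss_lower {v : ℝ≥0} {c : ℝ} (hc : 0 < c) (h1 : c ^ 2 / 2 ≤ (v : ℝ))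
    (h2 : (v : ℝ) ≤ c ^ 2) :
    ENNReal.ofReal ((Real.sqrt (2 * π))⁻¹ * Real.exp (-4)) ≤
      gaussianReal 0 v (Set.Ici c) := by
  have hvpos : (0 : ℝ) < (v : ℝ) := lt_of_lt_of_le (by positivity) h1
  have hv : v ≠ 0 := by
    intro h; rw [h] at hvpos; simp at hvpos
  rw [gaussianReal_apply 0 hv]
  set k : ℝ≥0∞ := ENNReal.ofReal ((Real.sqrt (2 * π * v))⁻¹ * Real.exp (-(2 * c) ^ 2 / (2 * v)))
  have step1 : ∫⁻ x in Set.Ico c (2 * c), k ∂volume ≤ ∫⁻ x in Set.Ici c, gaussianPDF 0 v x := by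
    refine le_trans (setLIntegral_mono (measurable_gaussianPDF 0 v) ?_)
      (lintegral_mono_set Set.Ico_subset_Ici_self)
    intro x hx
    rw [gaussianPDF]
    refine ENNReal.ofReal_le_ofReal ?_
    rw [gaussianPDFReal]
    have hx2 : (x - 0) ^ 2 ≤ (2 * c) ^ 2 := by
      rw [sub_zero]
      have h0x : 0 ≤ x := le_trans hc.le hx.1
      nlinarith [hx.1, hx.2.le]
    gcongr

  rw [setLIntegral_const, Real.volume_Ico] at step1
  refine le_trans ?_ step1
  have h2c : 2 * c - c = c := by ring
  rw [h2c, ← ENNReal.ofReal_mul (by positivity)]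
  refine ENNReal.ofReal_le_ofReal ?_
  have hsq : Real.sqrt (2 * π * v) ≤ Real.sqrt (2 * π) * c := by
    rw [← Real.sqrt_sq hc.le, ← Real.sqrt_mul (by positivity)]
    exact Real.sqrt_le_sqrt (by nlinarith [Real.pi_pos])
  have hinv : (Real.sqrt (2 * π))⁻¹ ≤ (Real.sqrt (2 * π * v))⁻¹ * c := by
    have hsp : (0 : ℝ) < Real.sqrt (2 * π * v) := Real.sqrt_pos.2 (by positivity)
    calc (Real.sqrt (2 * π))⁻¹ = (Real.sqrt (2 * π) * c)⁻¹ * c := by field_simp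
      _ ≤ (Real.sqrt (2 * π * v))⁻¹ * c :=
        mul_le_mul_of_nonneg_right (inv_anti₀ hsp hsq) hc.le
  have hexp : Real.exp (-4) ≤ Real.exp (-(2 * c) ^ 2 / (2 * v)) := by
    refine Real.exp_le_exp.2 ?_
    rw [neg_div, neg_le_neg_iff]
    rw [div_le_iff₀ (by positivity)]
    nlinarith
  calc (Real.sqrt (2 * π))⁻¹ * Real.exp (-4)
      ≤ ((Real.sqrt (2 * π * v))⁻¹ * c) * Real.exp (-(2 * c) ^ 2 / (2 * v)) :=
        mul_le_mul hinv hexp (Real.exp_pos _).le (by positivity)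
    _ = (Real.sqrt (2 * π * v))⁻¹ * Real.exp (-(2 * c) ^ 2 / (2 * v)) * c := by ring

lemma gauss_tail {v : ℝ≥0} {c : ℝ} (hc : 0 < c) :
    gaussianReal 0 v {x : ℝ | c ≤ |x|} ≤
      ENNReal.ofReal (Real.sqrt 2 * Real.exp (-c ^ 2 / (4 * v))) := by
  have hset : MeasurableSet {x : ℝ | c ≤ |x|} :=
    measurableSet_le measurable_const measurable_abs
  by_cases hv : v = 0
  · subst hv
    rw [gaussianReal_zero_var, Measure.dirac_apply' 0 hset]
    have : (0 : ℝ) ∉ {x : ℝ | c ≤ |x|} := by simp [abs_zero]; linarith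
    rw [Set.indicator_of_notMem this]
    positivity
  have hvpos : (0 : ℝ) < (v : ℝ) := by positivity
  rw [gaussianReal_apply 0 hv]
  set K : ℝ := (Real.sqrt (2 * π * v))⁻¹ * Real.exp (-c ^ 2 / (4 * v)) with hK
  have hKpos : 0 < K := by positivity
  have hpt : ∀ x ∈ {x : ℝ | c ≤ |x|},
      gaussianPDF 0 v x ≤ ENNReal.ofReal (K * Real.exp (-(4 * (v:ℝ))⁻¹ * x ^ 2)) := by
    intro x hx
    rw [gaussianPDF]
    refine ENNReal.ofReal_le_ofReal ?_
    have hrw : K * Real.exp (-(4 * (v:ℝ))⁻¹ * x ^ 2) =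
        (Real.sqrt (2 * π * (v:ℝ)))⁻¹ * Real.exp (-c ^ 2 / (4 * (v:ℝ)) + -(4 * (v:ℝ))⁻¹ * x ^ 2) := by
      rw [hK, mul_assoc, ← Real.exp_add]
    rw [gaussianPDFReal, hrw]
    refine mul_le_mul_of_nonneg_left (Real.exp_le_exp.2 ?_) (by positivity)
    have hx2 : c ^ 2 ≤ x ^ 2 := by
      have hcx : c ≤ |x| := hx
      nlinarith [abs_nonneg x, sq_abs x]
    have h4 : (0 : ℝ) < 4 * (v : ℝ) := by positivity
    rw [sub_zero, show -x ^ 2 / (2 * (v:ℝ)) =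
      -c ^ 2 / (4 * (v:ℝ)) + -(4 * (v:ℝ))⁻¹ * x ^ 2 - (x ^ 2 - c ^ 2) / (4 * (v:ℝ)) by
        field_simp; ring]
    linarith [div_nonneg (sub_nonneg.2 hx2) h4.le]
  calc ∫⁻ x in {x : ℝ | c ≤ |x|}, gaussianPDF 0 v x
      ≤ ∫⁻ x in {x : ℝ | c ≤ |x|},
          ENNReal.ofReal (K * Real.exp (-(4 * (v:ℝ))⁻¹ * x ^ 2)) := setLIntegral_mono
        ((measurable_const.mul ((measurable_id.pow_const 2).const_mul _).exp).ennreal_ofReal) hpt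
    _ ≤ ∫⁻ x, ENNReal.ofReal (K * Real.exp (-(4 * (v:ℝ))⁻¹ * x ^ 2)) :=
        setLIntegral_le_lintegral _ _
    _ = ENNReal.ofReal (∫ x, K * Real.exp (-(4 * (v:ℝ))⁻¹ * x ^ 2)) := by
        rw [← ofReal_integral_eq_lintegral_ofReal]
        · exact (integrable_exp_neg_mul_sq (by positivity)).const_mul K
        · exact ae_of_all _ fun x => by positivity
    _ ≤ ENNReal.ofReal (Real.sqrt 2 * Real.exp (-c ^ 2 / (4 * v))) := by
        refine ENNReal.ofReal_le_ofReal ?_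
        rw [MeasureTheory.integral_const_mul]
        have : ∫ x : ℝ, Real.exp (-(4 * (v:ℝ))⁻¹ * x ^ 2) = Real.sqrt (π / (4 * (v:ℝ))⁻¹) :=
          integral_gaussian _
        rw [this, hK]
        have hval : (Real.sqrt (2 * π * (v:ℝ)))⁻¹ * Real.sqrt (π / (4 * (v:ℝ))⁻¹) ≤ Real.sqrt 2 := by
          have e1 : π / (4 * (v:ℝ))⁻¹ = 2 * (2 * π * (v:ℝ)) := by
            rw [div_eq_mul_inv, inv_inv]; ring
          have e2 : Real.sqrt (2 * (2 * π * (v:ℝ))) =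
              Real.sqrt 2 * Real.sqrt (2 * π * (v:ℝ)) := Real.sqrt_mul (by norm_num) _
          have hs : (0:ℝ) < Real.sqrt (2 * π * (v:ℝ)) := Real.sqrt_pos.2 (by positivity)
          rw [e1, e2]
          refine le_of_eq ?_
          field_simp
        calc (Real.sqrt (2 * π * (v:ℝ)))⁻¹ * Real.exp (-c ^ 2 / (4 * (v:ℝ))) *
              Real.sqrt (π / (4 * (v:ℝ))⁻¹)
            = ((Real.sqrt (2 * π * (v:ℝ)))⁻¹ * Real.sqrt (π / (4 * (v:ℝ))⁻¹)) *
              Real.exp (-c ^ 2 / (4 * (v:ℝ))) := by ring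
          _ ≤ Real.sqrt 2 * Real.exp (-c ^ 2 / (4 * (v:ℝ))) :=
              mul_le_mul_of_nonneg_right hval (Real.exp_pos _).le

lemma indep_increments {Ω : Type*} [MeasurableSpace Ω] (P : Measure Ω)
    [IsProbabilityMeasure P] (B : ℝ → Ω → ℝ) (hmeas : ∀ s, Measurable (B s))
    (hindep : ∀ n : ℕ, ∀ t : Fin (n + 1) → ℝ, Monotone t → (∀ i, (0:ℝ) ≤ t i) →
      ProbabilityTheory.iIndepFun
        (fun i : Fin n => fun ω => B (t i.succ) ω - B (t i.castSucc) ω) P)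
    (t : ℕ → ℝ) (ht_pos : ∀ n, 0 < t n) (ht_anti : Antitone t) (c : ℕ → ℝ) :
    ProbabilityTheory.iIndepSet
      (fun n => {ω | c n ≤ B (t n) ω - B (t (n + 1)) ω}) P := by
  set A : ℕ → Set Ω := fun n => {ω | c n ≤ B (t n) ω - B (t (n + 1)) ω} with hA
  have hAmeas : ∀ n, MeasurableSet (A n) :=
    fun n => measurableSet_le measurable_const ((hmeas _).sub (hmeas _))
  rw [ProbabilityTheory.iIndepSet_iff_meas_biInter hAmeas]
  intro S
  -- choose N larger than all elements of S
  set N : ℕ := S.sup id + 1 with hN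
  have hSN : ∀ k ∈ S, k < N := fun k hk =>
    Nat.lt_succ_of_le (Finset.le_sup (f := id) hk)
  -- the times, in increasing order
  set u : Fin (N + 1) → ℝ := fun i => t (N - (i : ℕ)) with hu
  have humono : Monotone u := by
    intro i j hij
    exact ht_anti (Nat.sub_le_sub_left hij N)
  have hupos : ∀ i, (0:ℝ) ≤ u i := fun i => (ht_pos _).le
  have hI := hindep N u humono hupos
  set g : Fin N → Ω → ℝ := fun i => fun ω => B (u i.succ) ω - B (u i.castSucc) ω with hg
  -- reindexing map
  have hNpos : 0 < N := Nat.succ_pos _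
  set φ : ℕ → Fin N := fun k => ⟨N - 1 - k, by omega⟩ with hφ
  have hφinj : Set.InjOn φ S := by
    intro k1 hk1 k2 hk2 hkk
    have h1 := hSN k1 hk1
    have h2 := hSN k2 hk2
    have : N - 1 - k1 = N - 1 - k2 := congrArg Fin.val hkk
    omega
  set sets : Fin N → Set ℝ := fun i => Set.Ici (c (N - 1 - (i : ℕ))) with hsets
  have hkey : ∀ k ∈ S, g (φ k) ⁻¹' sets (φ k) = A k := by
    intro k hk
    have hkN : k < N := hSN k hk
    have h1 : ((φ k).succ : ℕ) = N - k := by simp [hφ]; omega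
    have h2 : ((φ k).castSucc : ℕ) = N - 1 - k := by simp [hφ]
    have h3 : N - (N - k) = k := by omega
    have h4 : N - (N - 1 - k) = k + 1 := by omega
    ext ω
    simp only [hg, hsets, hφ, Set.mem_preimage, Set.mem_Ici, hA, Set.mem_setOf_eq, hu, h1, h2,
      h3, h4]
    constructor
    · intro hle; convert hle using 4 <;> first | rfl | omega | (simp only [Fin.val_succ, Fin.val_castSucc]; omega)
    · intro hle; convert hle using 4 <;> first | rfl | omega | (simp only [Fin.val_succ, Fin.val_castSucc]; omega)
  have hprod := hI.measure_inter_preimage_eq_mul (S.image φ)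
    (sets := sets) (fun i _ => measurableSet_Ici)
  rw [Finset.set_biInter_finset_image, Finset.prod_image (fun x hx y hy => hφinj hx hy)] at hprod
  calc P (⋂ n ∈ S, A n) = P (⋂ k ∈ S, g (φ k) ⁻¹' sets (φ k)) := by
        congr 1
        exact (Set.iInter₂_congr hkey).symm
    _ = ∏ k ∈ S, P (g (φ k) ⁻¹' sets (φ k)) := hprod
    _ = ∏ k ∈ S, P (A k) := Finset.prod_congr rfl (fun k hk => by rw [hkey k hk])

/-- If `|h t - h 0| <= C * |t|^alpha` near `0` with `alpha > 1/2`, and `B` is a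
standard Brownian motion with `B 0 = 0`, then for any `a < 0 < b`, almost
surely `B + h` does not attain its maximum over `[a,b]` at `0`. -/
theorem bm_plus_holder_max_not_at_zero
    {Ω : Type*} [MeasurableSpace Ω] (P : Measure Ω) [IsProbabilityMeasure P]
    (B : ℝ → Ω → ℝ) (hB : IsStandardBM P 0 B)
    (h : ℝ → ℝ) (C α : ℝ) (hC : 0 < C) (hα : 1 / 2 < α)
    (δ : ℝ) (hδ : 0 < δ)
    (hhol : ∀ t : ℝ, |t| < δ → |h t - h 0| ≤ C * |t| ^ α)
    (a b : ℝ) (ha : a < 0) (hb : 0 < b) :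
    ∀ᵐ ω ∂P, ¬ IsMaxOn (fun t => B t ω + h t) (Set.Icc a b) 0 := by
  obtain ⟨hmeas, hcont, h0, hgauss, hindep⟩ := hB
  -- the sequence of times
  set t : ℕ → ℝ := fun n => Real.exp (-(n : ℝ) ^ 2) with htdef
  have ht_pos : ∀ n, 0 < t n := fun n => Real.exp_pos _
  have hexpinv : Real.exp (-1 : ℝ) ≤ 1 / 2 := by
    rw [Real.exp_neg]
    rw [inv_le_comm₀ (Real.exp_pos 1) (by norm_num)]
    linarith [Real.add_one_le_exp (1 : ℝ)]
  have ht_half : ∀ n, t (n + 1) ≤ t n / 2 := by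
    intro n
    have e1 : t (n + 1) = t n * Real.exp ((-((n:ℝ)+1) ^ 2) - (-(n:ℝ)^2)) := by
      rw [htdef, ← Real.exp_add]
      push_cast
      ring_nf
    rw [e1]
    have e2 : Real.exp ((-((n:ℝ)+1) ^ 2) - (-(n:ℝ)^2)) ≤ Real.exp (-1 : ℝ) :=
      Real.exp_le_exp.2 (by nlinarith [Nat.cast_nonneg (α := ℝ) n])
    calc t n * Real.exp ((-((n:ℝ)+1) ^ 2) - (-(n:ℝ)^2)) ≤ t n * (1/2) :=
          mul_le_mul_of_nonneg_left (e2.trans hexpinv) (ht_pos n).le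
      _ = t n / 2 := by ring
  have ht_anti : Antitone t :=
    antitone_nat_of_succ_le fun n => (ht_half n).trans (by linarith [ht_pos n])
  -- the independent events
  set A : ℕ → Set Ω :=
    fun n => {ω | Real.sqrt (t n) ≤ B (t n) ω - B (t (n + 1)) ω} with hAdef
  have hAmeas : ∀ n, MeasurableSet (A n) :=
    fun n => measurableSet_le measurable_const ((hmeas _).sub (hmeas _))
  have hAind : ProbabilityTheory.iIndepSet A P :=
    indep_increments P B hmeas hindep t ht_pos ht_anti _
  -- lower bound on P (A n)
  have hPA : ∀ n, ENNReal.ofReal ((Real.sqrt (2 * π))⁻¹ * Real.exp (-4)) ≤ P (A n) := by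
    intro n
    have hsub : t (n + 1) ≤ t n := ht_anti (Nat.le_succ n)
    have hmap := hgauss (t (n + 1)) (t n) (ht_pos _).le hsub
    have hA_eq : A n = (fun ω => B (t n) ω - B (t (n + 1)) ω) ⁻¹' Set.Ici (Real.sqrt (t n)) := by
      ext ω; simp [hAdef]
    rw [hA_eq, ← Measure.map_apply (f := fun ω => B (t n) ω - B (t (n + 1)) ω) ((hmeas _).sub (hmeas _)) measurableSet_Ici, hmap]
    have hcoe : ((Real.toNNReal (t n - t (n + 1))) : ℝ) = t n - t (n + 1) :=
      Real.coe_toNNReal _ (by linarith)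
    refine gauss_lower (Real.sqrt_pos.2 (ht_pos n)) ?_ ?_
    · rw [hcoe, Real.sq_sqrt (ht_pos n).le]
      linarith [ht_half n]
    · rw [hcoe, Real.sq_sqrt (ht_pos n).le]
      linarith [ht_pos (n + 1)]
  -- second Borel-Cantelli
  have htop : (∑' n, P (A n)) = ∞ := by
    refine top_le_iff.mp ?_
    calc (⊤ : ℝ≥0∞) = ∑' _ : ℕ, ENNReal.ofReal ((Real.sqrt (2 * π))⁻¹ * Real.exp (-4)) :=
          (ENNReal.tsum_const_eq_top_of_ne_zero
            (ENNReal.ofReal_pos.2 (by positivity)).ne').symm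
      _ ≤ ∑' n, P (A n) := ENNReal.tsum_le_tsum hPA
  have hBC2 := ProbabilityTheory.measure_limsup_eq_one hAmeas hAind htop
  have haeA : ∀ᵐ ω ∂P, ω ∈ limsup A atTop := by
    have hms : MeasurableSet (limsup A atTop) := MeasurableSet.measurableSet_limsup hAmeas
    refine ae_iff.2 ?_
    have : P (limsup A atTop)ᶜ = 0 := (prob_compl_eq_zero_iff hms).2 hBC2
    simpa [Set.compl_def] using this
  -- the bad events
  set D : ℕ → Set Ω :=
    fun n => {ω | (n : ℝ) * Real.sqrt (t (n + 1)) ≤ |B (t (n + 1)) ω|} with hDdef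
  have hPD : ∀ n, P (D n) ≤ ENNReal.ofReal (Real.sqrt 2 * Real.exp (-(n : ℝ) ^ 2 / 4)) := by
    intro n
    rcases Nat.eq_zero_or_pos n with hn | hn
    · subst hn
      refine le_trans prob_le_one ?_
      rw [show (1 : ℝ≥0∞) = ENNReal.ofReal 1 by simp]
      refine ENNReal.ofReal_le_ofReal ?_
      simp only [Nat.cast_zero]
      rw [show (-(0:ℝ)^2/4) = 0 by norm_num, Real.exp_zero, mul_one]
      rw [show (1:ℝ) = Real.sqrt 1 by simp]
      exact Real.sqrt_le_sqrt (by norm_num)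
    · have hmap := hgauss 0 (t (n + 1)) le_rfl (ht_pos _).le
      have hfun : (fun ω => B (t (n + 1)) ω - B 0 ω) = fun ω => B (t (n + 1)) ω := by
        funext ω; rw [h0 ω, sub_zero]
      rw [hfun, sub_zero] at hmap
      have hset : MeasurableSet {x : ℝ | (n : ℝ) * Real.sqrt (t (n + 1)) ≤ |x|} :=
        measurableSet_le measurable_const measurable_abs
      have hD_eq : D n = (fun ω => B (t (n + 1)) ω) ⁻¹'
          {x : ℝ | (n : ℝ) * Real.sqrt (t (n + 1)) ≤ |x|} := by
        ext ω; simp [hDdef]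
      rw [hD_eq, ← Measure.map_apply (hmeas _) hset, hmap]
      have hcpos : 0 < (n : ℝ) * Real.sqrt (t (n + 1)) := by
        have := Real.sqrt_pos.2 (ht_pos (n + 1))
        positivity
      refine (gauss_tail hcpos).trans (ENNReal.ofReal_le_ofReal ?_)
      have hcoe : ((Real.toNNReal (t (n + 1))) : ℝ) = t (n + 1) :=
        Real.coe_toNNReal _ (ht_pos _).le
      have harg : -((n : ℝ) * Real.sqrt (t (n + 1))) ^ 2 /
          (4 * ((Real.toNNReal (t (n + 1))) : ℝ)) = -(n : ℝ) ^ 2 / 4 := by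
        rw [hcoe, mul_pow, Real.sq_sqrt (ht_pos _).le]
        field_simp [(ht_pos (n + 1)).ne']
      rw [harg]
  have hsummable : Summable (fun n : ℕ => Real.sqrt 2 * Real.exp (-(n : ℝ) ^ 2 / 4)) := by
    have hgeo : Summable (fun n : ℕ => Real.sqrt 2 * (Real.exp (-(1:ℝ)/4)) ^ n) :=
      (summable_geometric_of_lt_one (Real.exp_pos _).le
        (Real.exp_lt_one_iff.2 (by norm_num))).mul_left _
    refine Summable.of_nonneg_of_le (fun n => by positivity) (fun n => ?_) hgeo
    rw [← Real.exp_nat_mul]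
    refine mul_le_mul_of_nonneg_left (Real.exp_le_exp.2 ?_) (Real.sqrt_nonneg 2)
    have hn : (n : ℝ) ≤ (n : ℝ) ^ 2 := by
      rcases Nat.eq_zero_or_pos n with hn | hn
      · subst hn; norm_num
      · have h1 : (1 : ℝ) ≤ (n : ℝ) := by exact_mod_cast hn
        nlinarith
    nlinarith
  have hsum_ne_top : (∑' n, P (D n)) ≠ ∞ := by
    refine ne_top_of_le_ne_top ?_ (ENNReal.tsum_le_tsum hPD)
    rw [← ENNReal.ofReal_tsum_of_nonneg (fun n => by positivity) hsummable]
    exact ENNReal.ofReal_ne_top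
  have haeD : ∀ᵐ ω ∂P, ∀ᶠ n in atTop, ω ∉ D n := by
    have hz := measure_setOf_frequently_eq_zero (p := fun n ω => ω ∈ D n) hsum_ne_top
    exact ae_iff.2 hz
  -- eventual estimates
  have ht0 : Tendsto t atTop (𝓝 0) := by
    refine Real.tendsto_exp_atBot.comp ?_
    have h1 : Tendsto (fun n : ℕ => (n : ℝ) ^ 2) atTop atTop :=
      (tendsto_pow_atTop two_ne_zero).comp tendsto_natCast_atTop_atTop
    exact tendsto_neg_atBot_iff.mpr h1
  have ev1 : ∀ᶠ n : ℕ in atTop, t n < δ := ht0.eventually_lt_const hδ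
  have ev2 : ∀ᶠ n : ℕ in atTop, t n < b := ht0.eventually_lt_const hb
  have hβ : 0 < α - 1 / 2 := by linarith
  have ev3 : ∀ᶠ n : ℕ in atTop, C * t n ^ α ≤ 1 / 4 * Real.sqrt (t n) := by
    have hpow : Tendsto (fun n : ℕ => t n ^ (α - 1 / 2)) atTop (𝓝 0) := by
      have heq : (fun n : ℕ => t n ^ (α - 1 / 2)) =
          fun n : ℕ => Real.exp (-(n : ℝ) ^ 2 * (α - 1 / 2)) := by
        funext n
        rw [htdef, Real.rpow_def_of_pos (Real.exp_pos _), Real.log_exp]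
      rw [heq]
      refine Real.tendsto_exp_atBot.comp ?_
      have h1 : Tendsto (fun n : ℕ => -(n : ℝ) ^ 2) atTop atBot :=
        tendsto_neg_atBot_iff.mpr
          ((tendsto_pow_atTop two_ne_zero).comp tendsto_natCast_atTop_atTop)
      exact h1.atBot_mul_const hβ
    filter_upwards [hpow.eventually_lt_const (show (0:ℝ) < 1 / (4 * C) by positivity)]
      with n hlt
    have hsplit : t n ^ α = Real.sqrt (t n) * t n ^ (α - 1 / 2) := by
      rw [Real.sqrt_eq_rpow, ← Real.rpow_add (ht_pos n)]
      norm_num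
    rw [hsplit]
    have h2 : Real.sqrt (t n) * t n ^ (α - 1 / 2) ≤ Real.sqrt (t n) * (1 / (4 * C)) :=
      mul_le_mul_of_nonneg_left hlt.le (Real.sqrt_nonneg _)
    calc C * (Real.sqrt (t n) * t n ^ (α - 1 / 2)) ≤ C * (Real.sqrt (t n) * (1 / (4 * C))) :=
          mul_le_mul_of_nonneg_left h2 hC.le
      _ = 1 / 4 * Real.sqrt (t n) := by field_simp
  have ev4 : ∀ᶠ n : ℕ in atTop,
      (n : ℝ) * Real.sqrt (t (n + 1)) ≤ 1 / 4 * Real.sqrt (t n) := by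
    rw [eventually_atTop]
    refine ⟨16, fun n hn => ?_⟩
    have hn16 : (16 : ℝ) ≤ (n : ℝ) := by exact_mod_cast hn
    have hsq : ∀ m : ℕ, Real.sqrt (t m) = Real.exp (-(m : ℝ) ^ 2 / 2) := by
      intro m
      rw [htdef]
      rw [← Real.exp_half]
    rw [hsq, hsq]
    have e1 : Real.exp (-((n : ℕ) + 1 : ℕ) ^ 2 / 2) =
        Real.exp (-(n : ℝ) ^ 2 / 2) * Real.exp (-((n : ℝ) + 1 / 2)) := by
      rw [← Real.exp_add]
      congr 1
      push_cast
      ring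
    rw [e1]
    have key : (n : ℝ) * Real.exp (-((n : ℝ) + 1 / 2)) ≤ 1 / 4 := by
      rw [Real.exp_neg, mul_inv_le_iff₀ (Real.exp_pos _)]
      have hx : ((n : ℝ) / 2 + 1) ≤ Real.exp ((n : ℝ) / 2) := by
        linarith [Real.add_one_le_exp ((n : ℝ) / 2)]
      have h2 : Real.exp ((n : ℝ) / 2) * Real.exp ((n : ℝ) / 2) ≤
          Real.exp ((n : ℝ) + 1 / 2) := by
        rw [← Real.exp_add]
        exact Real.exp_le_exp.2 (by linarith)
      nlinarith [Real.exp_pos ((n : ℝ) / 2)]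
    calc (n : ℝ) * (Real.exp (-(n : ℝ) ^ 2 / 2) * Real.exp (-((n : ℝ) + 1 / 2)))
        = Real.exp (-(n : ℝ) ^ 2 / 2) * ((n : ℝ) * Real.exp (-((n : ℝ) + 1 / 2))) := by ring
      _ ≤ Real.exp (-(n : ℝ) ^ 2 / 2) * (1 / 4) :=
          mul_le_mul_of_nonneg_left key (Real.exp_pos _).le
      _ = 1 / 4 * Real.exp (-(n : ℝ) ^ 2 / 2) := by ring
  -- conclusion
  filter_upwards [haeA, haeD] with ω hALimsup hDev
  intro hmax
  have hfreq : ∃ᶠ n in atTop, ω ∈ A n := mem_limsup_iff_frequently_mem.1 hALimsup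
  obtain ⟨n, hAn, hnD, h1, h2, h3, h4⟩ :=
    (hfreq.and_eventually (hDev.and (ev1.and (ev2.and (ev3.and ev4))))).exists
  have hAn' : Real.sqrt (t n) ≤ B (t n) ω - B (t (n + 1)) ω := hAn
  have hnD' : |B (t (n + 1)) ω| < (n : ℝ) * Real.sqrt (t (n + 1)) := not_le.1 hnD
  have hBtn : 3 / 4 * Real.sqrt (t n) ≤ B (t n) ω := by
    have habs := neg_abs_le (B (t (n + 1)) ω)
    linarith
  have hholn := hhol (t n) (by rw [abs_of_pos (ht_pos n)]; exact h1)
  rw [abs_of_pos (ht_pos n)] at hholn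
  have hhn : h 0 - C * t n ^ α ≤ h (t n) := by
    have := (abs_le.1 hholn).1
    linarith
  have hmem : t n ∈ Set.Icc a b := ⟨(ha.trans (ht_pos n)).le, h2.le⟩
  have hle := isMaxOn_iff.1 hmax (t n) hmem
  simp only [h0 ω, zero_add] at hle
  have hsqpos : 0 < Real.sqrt (t n) := Real.sqrt_pos.2 (ht_pos n)
  linarith
end
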